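/- There is a constant C such that for every natural number n ≥ 1, every symmetric function f on n bits is computed by a depth-3 MOD_5 ∘ MOD_6 ∘ MOD_5 circuit of size at most 2^{C · n^{1/3} · log(n+2)}. Moreover, the circuit can be chosen so that for every input x ∈ {0,1}^n, the nonnegative integer linear combination feeding the output MOD_5 gate is congruent to either 0 or 1 modulo 5. -/

import Mathlib

/-- A depth-3 `MOD_a ∘ MOD_b ∘ MOD_c` circuit on `n` Boolean inputs: a family of bottom
`MOD_c` gates applied to nonnegative integer linear combinations (with constant term) of
the inputs, a family of middle `MOD_b` gates applied to nonnegative integer linear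
combinations (with constant term) of the bottom-gate outputs, and a single output `MOD_a`
gate applied to a nonnegative integer linear combination (with constant term) of the
middle-gate outputs. -/
structure Depth3ModCircuit (a b c n : ℕ) where
  numBot : ℕ
  numMid : ℕ
  botConst : Fin numBot → ℕ
  botCoeff : Fin numBot → Fin n → ℕ
  midConst : Fin numMid → ℕ
  midCoeff : Fin numMid → Fin numBot → ℕ
  outConst : ℕ
  outCoeff : Fin numMid → ℕ

namespace Depth3ModCircuit

variable {a b c n : ℕ} (Ci : Depth3ModCircuit a b c n)

/-- Output (0 or 1) of a bottom `MOD_c` gate. -/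
def botEval (g : Fin Ci.numBot) (x : Fin n → Bool) : ℕ :=
  if c ∣ Ci.botConst g + ∑ i, Ci.botCoeff g i * (if x i then 1 else 0) then 1 else 0

/-- Output (0 or 1) of a middle `MOD_b` gate. -/
def midEval (g : Fin Ci.numMid) (x : Fin n → Bool) : ℕ :=
  if b ∣ Ci.midConst g + ∑ j, Ci.midCoeff g j * Ci.botEval j x then 1 else 0

/-- The nonnegative integer linear combination feeding the output `MOD_a` gate. -/
def outSum (x : Fin n → Bool) : ℕ :=
  Ci.outConst + ∑ g, Ci.outCoeff g * Ci.midEval g x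

/-- The Boolean output of the circuit. -/
def eval (x : Fin n → Bool) : Bool := decide (a ∣ Ci.outSum x)

/-- The size of the circuit: the total number of gates. -/
def size : ℕ := Ci.numBot + Ci.numMid + 1

end Depth3ModCircuit



set_option linter.unusedSectionVars false
namespace SymAux
open Finset

variable {R : Type*} [CommRing R]

/-- forward difference operator -/
def dd (φ : ℕ → R) : ℕ → R := fun s => φ (s+1) - φ s

lemma dd_shift (φ : ℕ → R) (j : ℕ) (s : ℕ) :
    dd^[j] (fun t => φ (t+1)) s = dd^[j] φ (s+1) := by
  induction j generalizing φ s with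
  | zero => rfl
  | succ j ih =>
    rw [Function.iterate_succ_apply, Function.iterate_succ_apply]
    have : dd (fun t => φ (t+1)) = fun t => (dd φ) (t+1) := rfl
    rw [this, ih]

lemma newton (φ : ℕ → R) : ∀ s, φ s = ∑ j ∈ range (s+1), (s.choose j : R) * dd^[j] φ 0 := by
  intro s
  induction s generalizing φ with
  | zero => simp
  | succ s ih =>
    have h1 : φ (s+1) = ∑ j ∈ range (s+1), (s.choose j : R) * dd^[j] φ 1 := by
      have h := ih (fun t => φ (t+1))
      simpa [dd_shift] using h
    have h2 : ∀ j, dd^[j] φ 1 = dd^[j] φ 0 + dd^[j+1] φ 0 := by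
      intro j
      rw [Function.iterate_succ_apply']
      show dd^[j] φ 1 = dd^[j] φ 0 + (dd^[j] φ 1 - dd^[j] φ 0)
      ring
    have h3 : φ (s+1)
        = ∑ j ∈ range (s+1), (s.choose j : R) * dd^[j] φ 0
          + ∑ j ∈ range (s+1), (s.choose j : R) * dd^[j+1] φ 0 := by
      rw [h1, ← Finset.sum_add_distrib]
      refine Finset.sum_congr rfl fun j _ => ?_
      rw [h2 j]; ring
    set A := ∑ j ∈ range s, (s.choose (j+1) : R) * dd^[j+1] φ 0 with hA
    set B := ∑ j ∈ range (s+1), (s.choose j : R) * dd^[j+1] φ 0 with hB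
    have h5 : ∑ j ∈ range (s+1), (s.choose (j+1) : R) * dd^[j+1] φ 0 = A := by
      rw [hA, Finset.sum_range_succ]
      simp [Nat.choose_succ_self]
    have hL : ∑ j ∈ range (s+1), (s.choose j : R) * dd^[j] φ 0 = A + dd^[0] φ 0 := by
      rw [Finset.sum_range_succ' (fun j => (s.choose j : R) * dd^[j] φ 0) s]
      simp [hA]
    have hR : ∑ j ∈ range (s+1+1), ((s+1).choose j : R) * dd^[j] φ 0
        = B + A + dd^[0] φ 0 := by
      rw [Finset.sum_range_succ' (fun j => ((s+1).choose j : R) * dd^[j] φ 0) (s+1)]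
      have : ∑ j ∈ range (s+1), (((s+1).choose (j+1) : ℕ) : R) * dd^[j+1] φ 0
          = ∑ j ∈ range (s+1), ((s.choose j : R) * dd^[j+1] φ 0
              + (s.choose (j+1) : R) * dd^[j+1] φ 0) := by
        refine Finset.sum_congr rfl fun j _ => ?_
        rw [Nat.choose_succ_succ]; push_cast; ring
      rw [this, Finset.sum_add_distrib, h5]
      simp [hB]
    rw [h3, hL, hR]; ring

lemma dd_alt (φ : ℕ → R) : ∀ (q s : ℕ),
    dd^[q] φ s = (-1:R)^q * ∑ i ∈ range (q+1), (-1:R)^i * ((q.choose i : R) * φ (s+i)) := by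
  intro q
  induction q generalizing φ with
  | zero => intro s; simp
  | succ q ih =>
    intro s
    rw [Function.iterate_succ_apply, ih (dd φ) s]
    have expand : ∑ i ∈ range (q+1), (-1:R)^i * ((q.choose i : R) * dd φ (s+i))
        = ∑ i ∈ range (q+1), (-1:R)^i * ((q.choose i : R) * φ (s+i+1))
          - ∑ i ∈ range (q+1), (-1:R)^i * ((q.choose i : R) * φ (s+i)) := by
      rw [← Finset.sum_sub_distrib]
      refine Finset.sum_congr rfl fun i _ => ?_
      show (-1:R)^i * ((q.choose i : R) * (φ (s+i+1) - φ (s+i))) = _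
      ring
    rw [expand]
    set P := ∑ i ∈ range (q+1), (-1:R)^i * ((q.choose i : R) * φ (s+i+1)) with hP
    set Q := ∑ i ∈ range (q+1), (-1:R)^i * ((q.choose i : R) * φ (s+i)) with hQdef
    set W := ∑ i ∈ range q, (-1:R)^(i+1) * ((q.choose (i+1) : R) * φ (s+i+1)) with hW
    have hQ : Q = W + φ s := by
      rw [hQdef, Finset.sum_range_succ' (fun i => (-1:R)^i * ((q.choose i : R) * φ (s+i))) q]
      have : ∀ k ∈ range q, (-1:R)^(k+1) * ((q.choose (k+1) : R) * φ (s+(k+1)))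
          = (-1:R)^(k+1) * ((q.choose (k+1) : R) * φ (s+k+1)) := fun k _ => rfl
      rw [Finset.sum_congr rfl this]
      simp [hW]
    have hT : ∑ i ∈ range (q+1+1), (-1:R)^i * (((q+1).choose i : R) * φ (s+i))
        = -P + W + φ s := by
      rw [Finset.sum_range_succ' (fun i => (-1:R)^i * (((q+1).choose i : R) * φ (s+i))) (q+1)]
      have e1 : ∑ i ∈ range (q+1), (-1:R)^(i+1) * (((q+1).choose (i+1) : R) * φ (s+(i+1)))
          = ∑ i ∈ range (q+1), ((-1:R)^(i+1) * ((q.choose i : R) * φ (s+i+1))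
              + (-1:R)^(i+1) * ((q.choose (i+1) : R) * φ (s+i+1))) := by
        refine Finset.sum_congr rfl fun i _ => ?_
        rw [Nat.choose_succ_succ, show s+(i+1) = s+i+1 from rfl]
        push_cast; ring
      rw [e1, Finset.sum_add_distrib]
      have e2 : ∑ i ∈ range (q+1), (-1:R)^(i+1) * ((q.choose (i+1) : R) * φ (s+i+1)) = W := by
        rw [hW, Finset.sum_range_succ]
        simp [Nat.choose_succ_self]
      have e3 : ∑ i ∈ range (q+1), (-1:R)^(i+1) * ((q.choose i : R) * φ (s+i+1)) = -P := by
        rw [hP, ← Finset.sum_neg_distrib]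
        refine Finset.sum_congr rfl fun i _ => ?_
        ring
      rw [e2, e3]
      simp
    rw [hT, hQ]
    ring

lemma dd_iter_zero (k : ℕ) : dd^[k] (fun _ => (0:R)) = fun _ => 0 := by
  induction k with
  | zero => rfl
  | succ k ih => rw [Function.iterate_succ_apply', ih]; funext s; simp [dd]

section PrimeStuff
variable (p : ℕ) [Fact p.Prime]

lemma choose_pow_cast_zero {e i : ℕ} (h0 : i ≠ 0) (hq : i ≠ p^e) : ((p^e).choose i : ZMod p) = 0 := by
  haveI : NeZero p := ⟨(Fact.out : p.Prime).ne_zero⟩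
  rw [ZMod.natCast_eq_zero_iff]
  exact Nat.Prime.dvd_choose_pow Fact.out h0 hq

lemma neg_one_pow_prime_pow (e : ℕ) : ((-1 : ZMod p)^(p^e)) = -1 := by
  rcases (Fact.out : p.Prime).eq_two_or_odd' with h2 | hodd
  · subst h2
    have h1 : (-1 : ZMod 2) = 1 := rfl
    rw [h1, one_pow]
  · exact (hodd.pow).neg_one_pow

lemma dd_pow_prime_eq_zero (φ : ℕ → ZMod p) (e : ℕ) (hper : ∀ s, φ (s + p^e) = φ s) :
    dd^[p^e] φ = fun _ => 0 := by
  funext s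
  rw [dd_alt]
  set q := p^e with hq
  have hq0 : 0 < q := pow_pos (Fact.out : p.Prime).pos e
  have hsum : ∑ i ∈ range (q+1), (-1:ZMod p)^i * (((q).choose i : ZMod p) * φ (s+i))
      = φ s + (-1:ZMod p)^q * φ s := by
    rw [Finset.sum_range_succ]
    have hmid : ∑ i ∈ range q, (-1:ZMod p)^i * (((q).choose i : ZMod p) * φ (s+i)) = φ s := by
      rw [Finset.sum_eq_single 0]
      · simp
      · intro i hi h0
        rw [choose_pow_cast_zero p h0 (Nat.ne_of_lt (mem_range.1 hi))]
        ring
      · intro h; exact absurd (mem_range.2 hq0) h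
    rw [hmid, Nat.choose_self, hper s]
    push_cast; ring
  rw [hsum]
  have hneg : ((-1 : ZMod p)^q) = -1 := neg_one_pow_prime_pow p e
  rw [hneg]; ring

lemma ind_expand (e t : ℕ) :
    ∃ γ : ℕ → ZMod p, ∀ s, (if s % p^e = t % p^e then (1:ZMod p) else 0)
      = ∑ j ∈ range (p^e), (s.choose j : ZMod p) * γ j := by
  set q := p^e with hq
  set φ : ℕ → ZMod p := fun s => if s % q = t % q then 1 else 0 with hφ
  refine ⟨fun j => dd^[j] φ 0, fun s => ?_⟩
  have hper : ∀ s, φ (s+q) = φ s := by intro s; simp [hφ, Nat.add_mod_right]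
  have hvan : ∀ j, q ≤ j → dd^[j] φ 0 = 0 := by
    intro j hj
    have h1 : dd^[(j - q) + q] φ = dd^[j-q] (dd^[q] φ) := Function.iterate_add_apply dd (j-q) q φ
    rw [Nat.sub_add_cancel hj] at h1
    rw [h1, dd_pow_prime_eq_zero p φ e hper, dd_iter_zero]
  have hnewton := newton φ s
  set N := max (s+1) q with hN
  have hA : ∑ j ∈ range q, (s.choose j : ZMod p) * dd^[j] φ 0
      = ∑ j ∈ range N, (s.choose j : ZMod p) * dd^[j] φ 0 := by
    refine Finset.sum_subset (Finset.range_subset_range.2 (le_max_right _ _)) ?_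
    intro j _ hj
    rw [hvan j (le_of_not_gt (fun h => hj (mem_range.2 h)))]
    ring
  have hB : ∑ j ∈ range (s+1), (s.choose j : ZMod p) * dd^[j] φ 0
      = ∑ j ∈ range N, (s.choose j : ZMod p) * dd^[j] φ 0 := by
    refine Finset.sum_subset (Finset.range_subset_range.2 (le_max_left _ _)) ?_
    intro j _ hj
    have hsj : s < j := by
      by_contra hcon
      exact hj (mem_range.2 (by omega))
    rw [Nat.choose_eq_zero_of_lt hsj]
    push_cast; ring
  show φ s = _
  rw [hnewton, hB, ← hA]

end PrimeStuff

lemma crt3 {m1 m2 m3 s t : ℕ} (h12 : Nat.Coprime m1 m2) (h13 : Nat.Coprime m1 m3)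
    (h23 : Nat.Coprime m2 m3) (h1 : s % m1 = t % m1) (h2 : s % m2 = t % m2)
    (h3 : s % m3 = t % m3) (hs : s < m1*m2*m3) (ht : t < m1*m2*m3) : s = t := by
  have e12 : s ≡ t [MOD m1*m2] := (Nat.modEq_and_modEq_iff_modEq_mul h12).1 ⟨h1, h2⟩
  have hc : Nat.Coprime (m1*m2) m3 := Nat.Coprime.mul h13 h23
  have e : s ≡ t [MOD m1*m2*m3] := (Nat.modEq_and_modEq_iff_modEq_mul hc).1 ⟨e12, h3⟩
  have e' : s % (m1*m2*m3) = t % (m1*m2*m3) := e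
  rwa [Nat.mod_eq_of_lt hs, Nat.mod_eq_of_lt ht] at e'

lemma sum6 (A0 : ℕ) : (∑ w ∈ range 6, if 6 ∣ A0 + w then (1:ZMod 5) else 0) = 1 := by
  rw [Finset.sum_eq_single ((6 - A0 % 6) % 6)]
  · rw [if_pos (by omega)]
  · intro w hw hne
    rw [if_neg]
    intro hdvd
    exact hne (by have := mem_range.1 hw; omega)
  · intro h
    exact absurd (mem_range.2 (by omega)) h

lemma trick (A0 B : ℕ) (hB : B ≤ 1) :
    ((B:ZMod 5) * (if 6 ∣ A0 then 1 else 0)) =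
      (if 6 ∣ 5 + B then (1:ZMod 5) else 0)
        - ∑ w ∈ range 5, (if 6 ∣ A0 + (w+1)*B then 1 else 0) := by
  interval_cases B
  · have hc : ∀ w ∈ range 5, (if 6 ∣ A0 + (w+1)*0 then (1:ZMod 5) else 0)
        = (if 6 ∣ A0 then (1:ZMod 5) else 0) := by
      intro w _; norm_num
    have h5 : ¬ (6 ∣ 5 + 0) := by omega
    rw [Finset.sum_congr rfl hc, Finset.sum_const, Finset.card_range, if_neg h5]
    have hz : ((5 : ℕ) • (if 6 ∣ A0 then (1:ZMod 5) else 0)) = 0 := by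
      by_cases h : 6 ∣ A0
      · rw [if_pos h, nsmul_eq_mul, mul_one]; decide
      · rw [if_neg h, smul_zero]
    rw [hz]
    norm_num
  · have hsix : (if 6 ∣ 5 + 1 then (1:ZMod 5) else 0) = 1 := by norm_num
    rw [hsix]
    have hs6 := sum6 A0
    rw [Finset.sum_range_succ' (fun w => if 6 ∣ A0 + w then (1:ZMod 5) else 0) 5] at hs6
    have hterms : ∀ w ∈ range 5, (if 6 ∣ A0 + (w+1)*1 then (1:ZMod 5) else 0)
        = (if 6 ∣ A0 + (w+1) then (1:ZMod 5) else 0) := by intro w _; norm_num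
    rw [Finset.sum_congr rfl hterms]
    simp only [add_zero] at hs6
    have hnorm : ∀ w : ℕ, A0 + (w+1) = A0 + w + 1 := fun w => by omega
    simp only [hnorm] at hs6 ⊢
    rw [Nat.cast_one, one_mul]
    linear_combination hs6

section Mono
variable {ι : Type*} [Fintype ι] [DecidableEq ι]

def biN (x : ι → Bool) (i : ι) : ℕ := if x i = true then 1 else 0
def yUN (U : Finset ι) (x : ι → Bool) : ℕ := ∑ i ∈ U, biN x i
def monoN (U : Finset ι) (x : ι → Bool) : ℕ := if (∀ i ∈ U, x i = true) then 1 else 0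

lemma yUN_eq_card_filter (U : Finset ι) (x : ι → Bool) :
    yUN U x = (U.filter (fun i => x i = true)).card := (Finset.card_filter _ _).symm

lemma yUN_le (U : Finset ι) (x : ι → Bool) : yUN U x ≤ U.card := by
  rw [yUN_eq_card_filter]; exact Finset.card_filter_le _ _

lemma monoN_le_one (U : Finset ι) (x : ι → Bool) : monoN U x ≤ 1 := by
  unfold monoN; split <;> omega

lemma monoN_eq (U : Finset ι) (x : ι → Bool) :
    monoN U x = if yUN U x = U.card then 1 else 0 := by
  rw [yUN_eq_card_filter]
  unfold monoN
  by_cases h : ∀ i ∈ U, x i = true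
  · rw [if_pos h, if_pos]
    rw [Finset.filter_true_of_mem h]
  · rw [if_neg h, if_neg]
    intro hc
    have heq : U.filter (fun i => x i = true) = U :=
      Finset.eq_of_subset_of_card_le (Finset.filter_subset _ _) (le_of_eq hc.symm)
    refine h (fun i hi => ?_)
    rw [← heq] at hi
    exact (Finset.mem_filter.1 hi).2

lemma monoN_eq_prod (U : Finset ι) (x : ι → Bool) : monoN U x = ∏ i ∈ U, biN x i := by
  unfold monoN biN
  rw [Finset.prod_boole]
  simp

lemma monoN_mul (V W : Finset ι) (x : ι → Bool) :
    monoN V x * monoN W x = monoN (V ∪ W) x := by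
  unfold monoN
  by_cases hV : ∀ i ∈ V, x i = true
  · by_cases hW : ∀ i ∈ W, x i = true
    · rw [if_pos hV, if_pos hW,
        if_pos (fun i hi => (Finset.mem_union.1 hi).elim (hV i) (hW i))]
    · have hVW : ¬ ∀ i ∈ V ∪ W, x i = true :=
        fun h => hW fun i hi => h i (Finset.mem_union_right V hi)
      rw [if_pos hV, if_neg hW, if_neg hVW, mul_zero]
  · have hVW : ¬ ∀ i ∈ V ∪ W, x i = true :=
      fun h => hV fun i hi => h i (Finset.mem_union_left W hi)
    rw [if_neg hV, if_neg hVW, zero_mul]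

lemma sum_monoN (s : Finset ι) (j : ℕ) (x : ι → Bool) :
    ∑ V ∈ Finset.powersetCard j s, monoN V x
      = (s.filter (fun i => x i = true)).card.choose j := by
  set F := s.filter (fun i => x i = true) with hF
  have h1 : ∀ V ∈ Finset.powersetCard j s, monoN V x = if V ⊆ F then 1 else 0 := by
    intro V hV
    have hVs : V ⊆ s := (Finset.mem_powersetCard.1 hV).1
    unfold monoN
    refine if_congr ⟨fun h i hi => Finset.mem_filter.2 ⟨hVs hi, h i hi⟩,
      fun h i hi => (Finset.mem_filter.1 (h hi)).2⟩ rfl rfl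
  rw [Finset.sum_congr rfl h1, ← Finset.card_filter]
  have h2 : (Finset.powersetCard j s).filter (fun V => V ⊆ F) = Finset.powersetCard j F := by
    ext V
    simp only [Finset.mem_filter, Finset.mem_powersetCard]
    constructor
    · rintro ⟨⟨_, hcard⟩, hsub⟩; exact ⟨hsub, hcard⟩
    · rintro ⟨hsub, hcard⟩
      exact ⟨⟨hsub.trans (Finset.filter_subset _ _), hcard⟩, hsub⟩
  rw [h2, Finset.card_powersetCard]

end Mono


section Gates

/-- Bottom-gate index: a constant in `Fin 5` and a list (with multiplicity) of at most
`dB` input wires. -/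
abbrev GI (n dB : ℕ) := Fin 5 × (Fin dB → Option (Fin n))

variable {n dB : ℕ}

def gConst (g : GI n dB) : ℕ := g.1.val

def gCoeff (g : GI n dB) (i : Fin n) : ℕ :=
  (Finset.univ.filter (fun k => g.2 k = some i)).card

def gEval (g : GI n dB) (x : Fin n → Bool) : ℕ :=
  if 5 ∣ gConst g + ∑ i, gCoeff g i * biN x i then 1 else 0

lemma gate_realize (S : Finset (Fin n)) (hS : S.card ≤ dB) (r : ℕ) :
    ∃ g : GI n dB, ∀ x, gEval g x = if (yUN S x) % 5 = r % 5 then 1 else 0 := by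
  classical
  refine ⟨⟨⟨(5 - r % 5) % 5, by omega⟩,
    fun k => if h : (k : ℕ) < S.card then some ((S.equivFin.symm ⟨(k : ℕ), h⟩ : {a // a ∈ S}) : Fin n) else none⟩,
    fun x => ?_⟩
  set g : GI n dB := ⟨⟨(5 - r % 5) % 5, by omega⟩,
    fun k => if h : (k : ℕ) < S.card then some ((S.equivFin.symm ⟨(k : ℕ), h⟩ : {a // a ∈ S}) : Fin n) else none⟩ with hg
  have hcoeff : ∀ i : Fin n, gCoeff g i = if i ∈ S then 1 else 0 := by
    intro i
    by_cases hi : i ∈ S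
    · rw [if_pos hi]
      have hk0 : ((S.equivFin ⟨i, hi⟩ : Fin S.card) : ℕ) < dB :=
        lt_of_lt_of_le (S.equivFin ⟨i, hi⟩).2 hS
      apply Finset.card_eq_one.2
      refine ⟨⟨(S.equivFin ⟨i, hi⟩ : Fin S.card), hk0⟩, ?_⟩
      ext k
      simp only [Finset.mem_filter, Finset.mem_univ, true_and, Finset.mem_singleton]
      constructor
      · intro hk
        by_cases h : (k : ℕ) < S.card
        · simp only [hg] at hk
          rw [dif_pos h] at hk
          have hsub : (S.equivFin.symm ⟨(k : ℕ), h⟩ : {a // a ∈ S}) = ⟨i, hi⟩ :=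
            Subtype.ext (by exact Option.some_injective _ hk)
          have := congrArg S.equivFin hsub
          rw [Equiv.apply_symm_apply] at this
          have hval := congrArg Fin.val this
          exact Fin.val_injective hval
        · simp only [hg] at hk
          rw [dif_neg h] at hk
          exact absurd hk (by simp)
      · intro hk
        subst hk
        simp only [hg]
        rw [dif_pos (show ((⟨((S.equivFin ⟨i, hi⟩ : Fin S.card) : ℕ), hk0⟩ : Fin dB) : ℕ) < S.card
          from (S.equivFin ⟨i, hi⟩).2)]
        congr 1
        rw [show (⟨((⟨((S.equivFin ⟨i, hi⟩ : Fin S.card) : ℕ), hk0⟩ : Fin dB) : ℕ), (S.equivFin ⟨i, hi⟩).2⟩ : Fin S.card)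
            = S.equivFin ⟨i, hi⟩ from Fin.ext rfl, Equiv.symm_apply_apply]
    · rw [if_neg hi]
      apply Finset.card_eq_zero.2
      ext k
      simp only [Finset.mem_filter, Finset.mem_univ, true_and, Finset.notMem_empty, iff_false]
      intro hk
      by_cases h : (k : ℕ) < S.card
      · simp only [hg] at hk
        rw [dif_pos h] at hk
        have : ((S.equivFin.symm ⟨(k : ℕ), h⟩ : {a // a ∈ S}) : Fin n) = i :=
          Option.some_injective _ hk
        exact hi (this ▸ (S.equivFin.symm ⟨(k : ℕ), h⟩).2)
      · simp only [hg] at hk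
        rw [dif_neg h] at hk
        exact absurd hk (by simp)
  have hsum : ∑ i, gCoeff g i * biN x i = yUN S x := by
    have : ∀ i : Fin n, gCoeff g i * biN x i = if i ∈ S then biN x i else 0 := by
      intro i
      rw [hcoeff i]
      by_cases hi : i ∈ S <;> simp [hi]
    rw [Finset.sum_congr rfl (fun i _ => this i), Finset.sum_ite_mem,
      Finset.univ_inter]
    rfl
  unfold gEval
  rw [hsum]
  have hgc : gConst g = (5 - r % 5) % 5 := rfl
  rw [hgc]
  by_cases h : yUN S x % 5 = r % 5
  · rw [if_pos (by omega), if_pos h]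
  · rw [if_neg (by omega), if_neg h]

variable (p : ℕ) [Fact (Nat.Prime p)]

/-- Bottom-gate outputs as `ZMod p`-valued functions. -/
def botFam (n dB : ℕ) (p : ℕ) : GI n dB → ((Fin n → Bool) → ZMod p) :=
  fun g x => ((gEval g x : ℕ) : ZMod p)

lemma mono_mem_span (hdvd : 5 ∣ p^4 - 1)
    (R : Finset (Fin n)) (hR : R.card ≤ dB) :
    (fun x => ((monoN R x : ℕ) : ZMod p)) ∈
      Submodule.span (ZMod p) (Set.range (botFam n dB p)) := by
  classical
  haveI : Fact (Nat.Prime 5) := ⟨by norm_num⟩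
  set FF := GaloisField p 4 with hFF
  letI : Fintype FF := Fintype.ofFinite FF
  -- element of order 5
  have hcardFF : Fintype.card FF = p^4 := by
    rw [← Nat.card_eq_fintype_card]
    exact GaloisField.card p 4 (by norm_num)
  have hcardU : Fintype.card FFˣ = p^4 - 1 := by
    rw [Fintype.card_units, hcardFF]
  obtain ⟨ζu, hordu⟩ := exists_prime_orderOf_dvd_card (G := FFˣ) 5 (by rw [hcardU]; exact hdvd)
  set ζ : FF := (ζu : FF) with hζdef
  have hζord : orderOf ζ = 5 := by rw [hζdef, orderOf_units, hordu]
  have hζ5 : ζ^5 = 1 := by rw [← hζord]; exact pow_orderOf_eq_one ζ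
  have hζne1 : ζ ≠ 1 := by
    intro h
    rw [h, orderOf_one] at hζord
    omega
  have hsub_ne : ζ - 1 ≠ 0 := sub_ne_zero.2 hζne1
  have hpow_iff : ∀ y : ℕ, (ζ^y = 1 ↔ 5 ∣ y) := by
    intro y
    rw [← hζord]
    exact (orderOf_dvd_iff_pow_eq_one).symm
  have hζmod : ∀ y : ℕ, ζ^y = ζ^(y % 5) := by
    intro y
    conv_lhs => rw [← Nat.div_add_mod y 5]
    rw [pow_add, pow_mul, hζ5, one_pow, one_mul]
  -- gates for each subset/residue
  have hreal : ∀ t ∈ R.powerset, ∀ r : ℕ, ∃ g : GI n dB,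
      ∀ x, gEval g x = if (yUN t x) % 5 = r % 5 then 1 else 0 := by
    intro t ht r
    exact gate_realize t (le_trans (Finset.card_le_card (Finset.mem_powerset.1 ht)) hR) r
  choose gg hgg using hreal
  -- the FF-valued identity
  have main : ∀ x : Fin n → Bool, ((monoN R x : ℕ) : FF)
      = ∑ t ∈ R.powerset.attach, ∑ r ∈ Finset.range 5,
          (((ζ - 1)⁻¹)^R.card * (-1:FF)^((R \ t.1).card) * ζ^r)
            * ((gEval (gg t.1 t.2 r) x : ℕ) : FF) := by
    intro x
    have hbi : ∀ i : Fin n, ((biN x i : ℕ) : FF) = (ζ - 1)⁻¹ * (ζ^(biN x i) + (-1)) := by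
      intro i
      unfold biN
      by_cases h : x i = true
      · rw [if_pos h, pow_one, ← sub_eq_add_neg, inv_mul_cancel₀ hsub_ne]
        norm_num
      · rw [if_neg h, pow_zero]
        norm_num
    have h1 : ((monoN R x : ℕ) : FF) = ∏ i ∈ R, ((biN x i : ℕ) : FF) := by
      rw [monoN_eq_prod, Nat.cast_prod]
    rw [h1, Finset.prod_congr rfl (fun i _ => hbi i), Finset.prod_mul_distrib,
      Finset.prod_const]
    rw [Finset.prod_add]
    rw [Finset.mul_sum]
    rw [← Finset.sum_attach R.powerset (fun t => ((ζ-1)⁻¹)^R.card *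
      ((∏ i ∈ t, ζ^(biN x i)) * ∏ _i ∈ R \ t, (-1:FF)))]
    refine Finset.sum_congr rfl fun t _ => ?_
    rw [Finset.prod_pow_eq_pow_sum, Finset.prod_const]
    have hY : ζ^(∑ i ∈ t.1, biN x i) = ∑ r ∈ Finset.range 5,
        ζ^r * ((gEval (gg t.1 t.2 r) x : ℕ) : FF) := by
      have hterm : ∀ r ∈ Finset.range 5, ζ^r * ((gEval (gg t.1 t.2 r) x : ℕ) : FF)
          = if (yUN t.1 x) % 5 = r then ζ^r else 0 := by
        intro r hr
        rw [hgg t.1 t.2 r x]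
        have hrr : r % 5 = r := Nat.mod_eq_of_lt (Finset.mem_range.1 hr)
        rw [hrr]
        by_cases h : yUN t.1 x % 5 = r
        · rw [if_pos h, if_pos h]; norm_num
        · rw [if_neg h, if_neg h]; norm_num
      rw [Finset.sum_congr rfl hterm]
      have hmem : yUN t.1 x % 5 ∈ Finset.range 5 := Finset.mem_range.2 (Nat.mod_lt _ (by norm_num))
      rw [Finset.sum_ite_eq (Finset.range 5) (yUN t.1 x % 5) (fun r => ζ^r), if_pos hmem]
      exact hζmod (yUN t.1 x)
    rw [show (∑ i ∈ t.1, biN x i) = yUN t.1 x from rfl] at hY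
    rw [show (∑ i ∈ (t.1 : Finset (Fin n)), biN x i) = yUN t.1 x from rfl, hY]
    rw [Finset.sum_mul, Finset.mul_sum]
    refine Finset.sum_congr rfl fun r _ => ?_
    ring
  -- FF-span membership, via explicit coefficients; then descend to ZMod p.
  -- linear functional π : FF → ZMod p with π 1 = 1
  obtain ⟨q, hq⟩ := Submodule.exists_isCompl (Submodule.span (ZMod p) {(1:FF)})
  have h1mem : (1:FF) ∈ Submodule.span (ZMod p) {(1:FF)} := Submodule.mem_span_singleton_self 1
  set proj := (Submodule.span (ZMod p) {(1:FF)}).linearProjOfIsCompl q hq with hproj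
  set ee := LinearEquiv.toSpanNonzeroSingleton (ZMod p) FF 1 one_ne_zero with hee
  set π : FF →ₗ[ZMod p] ZMod p := ee.symm.toLinearMap.comp proj with hπ
  have hπ1 : π 1 = 1 := by
    have hp1 : proj 1 = ⟨1, h1mem⟩ :=
      Submodule.linearProjOfIsCompl_apply_left hq ⟨1, h1mem⟩
    have he1 : ee 1 = ⟨1, h1mem⟩ := by
      apply Subtype.ext
      rw [LinearEquiv.toSpanNonzeroSingleton_apply]
      simp
    rw [hπ]
    simp only [LinearMap.comp_apply, LinearEquiv.coe_toLinearMap]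
    rw [hp1, ← he1, LinearEquiv.symm_apply_apply]
  have hπsmul : ∀ (c : FF) (N : ℕ), π (c * (N : FF)) = π c * (N : ZMod p) := by
    intro c N
    have : (N : FF) = algebraMap (ZMod p) FF (N : ZMod p) := (map_natCast _ N).symm
    rw [this, mul_comm, ← Algebra.smul_def, map_smul]
    rw [smul_eq_mul, mul_comm]
  -- conclude
  rw [Submodule.mem_span_range_iff_exists_fun]
  classical
  -- coefficient function on gate indices
  set cFF : GI n dB → FF := fun g =>
    ∑ t ∈ R.powerset.attach, ∑ r ∈ Finset.range 5,
      (if gg t.1 t.2 r = g then (((ζ - 1)⁻¹)^R.card * (-1:FF)^((R \ t.1).card) * ζ^r) else 0)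
    with hcFF
  refine ⟨fun g => π (cFF g), ?_⟩
  funext x
  -- LHS : ∑ g (π (cFF g)) • botFam g x
  have hswap : ∑ g : GI n dB, π (cFF g) • botFam n dB p g x
      = π (∑ g : GI n dB, cFF g * ((gEval g x : ℕ) : FF)) := by
    rw [map_sum]
    refine Finset.sum_congr rfl fun g _ => ?_
    rw [hπsmul (cFF g) (gEval g x)]
    rw [smul_eq_mul]
    rfl
  have hcollect : ∑ g : GI n dB, cFF g * ((gEval g x : ℕ) : FF) = ((monoN R x : ℕ) : FF) := by
    rw [hcFF]
    simp +zetaDelta only [Finset.sum_mul]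
    rw [Finset.sum_comm]
    rw [main x]
    refine Finset.sum_congr rfl fun t _ => ?_
    rw [Finset.sum_comm]
    refine Finset.sum_congr rfl fun r _ => ?_
    rw [Finset.sum_eq_single (gg t.1 t.2 r)]
    · rw [if_pos rfl]
    · intro g _ hne
      rw [if_neg (fun h => hne h.symm)]
      ring
    · intro h
      exact absurd (Finset.mem_univ _) h
  rw [Finset.sum_apply]
  simp only [Pi.smul_apply]
  rw [hswap, hcollect]
  have : ((monoN R x : ℕ) : FF) = algebraMap (ZMod p) FF ((monoN R x : ℕ) : ZMod p) := by
    rw [map_natCast]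
  rw [this, Algebra.algebraMap_eq_smul_one, map_smul, hπ1, smul_eq_mul, mul_one]

end Gates


section Counting

lemma gEval_le_one {n dB : ℕ} (g : GI n dB) (x : Fin n → Bool) : gEval g x ≤ 1 := by
  unfold gEval; split <;> omega

/-- subsets of size ≤ K, as a subtype -/
abbrev UI (n K : ℕ) := {U : Finset (Fin n) // U.card ≤ K}

lemma card_UI_le (n K : ℕ) : Fintype.card (UI n K) ≤ (n+1)^K := by
  classical
  have hinj : Function.Injective (fun (U : UI n K) => (fun k : Fin K =>
      if h : (k : ℕ) < U.1.card then some ((U.1.equivFin.symm ⟨(k : ℕ), h⟩ : {a // a ∈ U.1}) : Fin n)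
      else none)) := by
    intro U V hUV
    have hmem : ∀ (W : UI n K) (i : Fin n), i ∈ W.1 ↔ ∃ k : Fin K,
        (if h : (k : ℕ) < W.1.card then some ((W.1.equivFin.symm ⟨(k : ℕ), h⟩ : {a // a ∈ W.1}) : Fin n)
         else none) = some i := by
      intro W i
      constructor
      · intro hi
        refine ⟨⟨(W.1.equivFin ⟨i, hi⟩ : Fin W.1.card), lt_of_lt_of_le (W.1.equivFin ⟨i, hi⟩).2 W.2⟩, ?_⟩
        rw [dif_pos (show ((⟨((W.1.equivFin ⟨i, hi⟩ : Fin W.1.card) : ℕ), _⟩ : Fin K) : ℕ) < W.1.card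
          from (W.1.equivFin ⟨i, hi⟩).2)]
        congr 1
        rw [show (⟨((⟨((W.1.equivFin ⟨i, hi⟩ : Fin W.1.card) : ℕ), _⟩ : Fin K) : ℕ), (W.1.equivFin ⟨i, hi⟩).2⟩ : Fin W.1.card)
            = W.1.equivFin ⟨i, hi⟩ from Fin.ext rfl, Equiv.symm_apply_apply]
      · rintro ⟨k, hk⟩
        by_cases h : (k : ℕ) < W.1.card
        · rw [dif_pos h] at hk
          have : ((W.1.equivFin.symm ⟨(k : ℕ), h⟩ : {a // a ∈ W.1}) : Fin n) = i :=
            Option.some_injective _ hk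
          exact this ▸ (W.1.equivFin.symm ⟨(k : ℕ), h⟩).2
        · rw [dif_neg h] at hk
          exact absurd hk (by simp)
    apply Subtype.ext
    ext i
    rw [hmem U i, hmem V i]
    constructor
    · rintro ⟨k, hk⟩; exact ⟨k, (congrFun hUV k).symm.trans hk⟩
    · rintro ⟨k, hk⟩; exact ⟨k, (congrFun hUV k).trans hk⟩
  calc Fintype.card (UI n K) ≤ Fintype.card (Fin K → Option (Fin n)) :=
        Fintype.card_le_of_injective _ hinj
    _ = (n+1)^K := by simp [Fintype.card_fun]

end Counting

/-- `MOD M` equality indicator -/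
def indN (M s t : ℕ) : ℕ := if s % M = t % M then 1 else 0

lemma indN_le_one (M s t : ℕ) : indN M s t ≤ 1 := by unfold indN; split <;> omega


section SpanHelpers

open Finset

lemma one_mem_span (p : ℕ) [Fact (Nat.Prime p)] {n dB : ℕ} :
    (fun _ : Fin n → Bool => (1 : ZMod p)) ∈
      Submodule.span (ZMod p) (Set.range (botFam n dB p)) := by
  obtain ⟨g0, hg0⟩ := gate_realize (∅ : Finset (Fin n)) (Nat.zero_le dB) 0
  apply Submodule.subset_span
  refine ⟨g0, funext fun x => ?_⟩
  unfold botFam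
  rw [hg0 x]
  norm_num [yUN]

lemma prod_ind_mem_span (p : ℕ) [Fact (Nat.Prime p)] (hdvd : 5 ∣ p^4 - 1)
    {n dB : ℕ} (e : ℕ) (t : ℕ) (U : Finset (Fin n))
    (hdeg : (p^e - 1) + (p^e - 1) ≤ dB) :
    (fun x : Fin n → Bool =>
        ((indN (p^e) (yUN Finset.univ x) t * indN (p^e) (yUN U x) U.card : ℕ) : ZMod p))
      ∈ Submodule.span (ZMod p) (Set.range (botFam n dB p)) := by
  classical
  obtain ⟨γ, hγ⟩ := ind_expand p e t
  obtain ⟨δ, hδ⟩ := ind_expand p e U.card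
  have key : ∀ x : Fin n → Bool,
      ((indN (p^e) (yUN Finset.univ x) t * indN (p^e) (yUN U x) U.card : ℕ) : ZMod p)
      = ∑ j ∈ range (p^e), ∑ k ∈ range (p^e),
          ∑ V ∈ powersetCard j (Finset.univ : Finset (Fin n)),
          ∑ W ∈ powersetCard k U,
            (γ j * δ k) * ((monoN (V ∪ W) x : ℕ) : ZMod p) := by
    intro x
    have e1 : ((indN (p^e) (yUN Finset.univ x) t : ℕ) : ZMod p)
        = ∑ j ∈ range (p^e), ((yUN Finset.univ x).choose j : ZMod p) * γ j := by
      rw [← hγ (yUN Finset.univ x)]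
      unfold indN
      split <;> simp
    have e2 : ((indN (p^e) (yUN U x) U.card : ℕ) : ZMod p)
        = ∑ k ∈ range (p^e), ((yUN U x).choose k : ZMod p) * δ k := by
      rw [← hδ (yUN U x)]
      unfold indN
      split <;> simp
    rw [Nat.cast_mul, e1, e2, Finset.sum_mul_sum]
    refine Finset.sum_congr rfl fun j _ => Finset.sum_congr rfl fun k _ => ?_
    have hCs : ((yUN Finset.univ x).choose j : ZMod p)
        = ∑ V ∈ powersetCard j (Finset.univ : Finset (Fin n)), ((monoN V x : ℕ) : ZMod p) := by
      rw [← Nat.cast_sum, sum_monoN, ← yUN_eq_card_filter]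
    have hCy : ((yUN U x).choose k : ZMod p)
        = ∑ W ∈ powersetCard k U, ((monoN W x : ℕ) : ZMod p) := by
      rw [← Nat.cast_sum, sum_monoN, ← yUN_eq_card_filter]
    rw [hCs, hCy]
    have hrearr : ((∑ V ∈ powersetCard j (Finset.univ : Finset (Fin n)), ((monoN V x : ℕ) : ZMod p)) * γ j)
          * ((∑ W ∈ powersetCard k U, ((monoN W x : ℕ) : ZMod p)) * δ k)
        = ((∑ V ∈ powersetCard j (Finset.univ : Finset (Fin n)), ((monoN V x : ℕ) : ZMod p))
            * (∑ W ∈ powersetCard k U, ((monoN W x : ℕ) : ZMod p))) * (γ j * δ k) := by ring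
    rw [hrearr, Finset.sum_mul_sum, Finset.sum_mul]
    refine Finset.sum_congr rfl fun V _ => ?_
    rw [Finset.sum_mul]
    refine Finset.sum_congr rfl fun W _ => ?_
    rw [← Nat.cast_mul, monoN_mul]
    ring
  have hfun : (fun x : Fin n → Bool =>
      ((indN (p^e) (yUN Finset.univ x) t * indN (p^e) (yUN U x) U.card : ℕ) : ZMod p))
      = ∑ j ∈ range (p^e), ∑ k ∈ range (p^e),
          ∑ V ∈ powersetCard j (Finset.univ : Finset (Fin n)),
          ∑ W ∈ powersetCard k U,
            (γ j * δ k) • (fun x => ((monoN (V ∪ W) x : ℕ) : ZMod p)) := by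
    funext x
    rw [key x]
    simp [Finset.sum_apply, Pi.smul_apply, smul_eq_mul]
  rw [hfun]
  refine Submodule.sum_mem _ fun j hj => Submodule.sum_mem _ fun k hk =>
    Submodule.sum_mem _ fun V hV => Submodule.sum_mem _ fun W hW =>
    Submodule.smul_mem _ _ (mono_mem_span p hdvd (V ∪ W) ?_)
  have hVc : V.card = j := Finset.mem_powersetCard_univ.1 hV
  have hWc : W.card = k := (Finset.mem_powersetCard.1 hW).2
  have hjk : j < p^e := Finset.mem_range.1 hj
  have hkk : k < p^e := Finset.mem_range.1 hk
  have := Finset.card_union_le V W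
  omega

lemma card_filter_val_lt (n t : ℕ) (ht : t ≤ n) :
    (Finset.univ.filter fun i : Fin n => (i : ℕ) < t).card = t := by
  have hbij : (Finset.univ.filter fun i : Fin n => (i : ℕ) < t).card = (Finset.range t).card := by
    apply Finset.card_bij (fun (i : Fin n) _ => (i : ℕ))
    · intro i hi
      exact Finset.mem_range.2 (Finset.mem_filter.1 hi).2
    · intro i hi j hj hij
      exact Fin.val_injective hij
    · intro j hj
      have hjn : j < n := lt_of_lt_of_le (Finset.mem_range.1 hj) ht
      exact ⟨⟨j, hjn⟩, Finset.mem_filter.2 ⟨Finset.mem_univ _, Finset.mem_range.1 hj⟩, rfl⟩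
  rw [hbij, Finset.card_range]

end SpanHelpers


section MidGates

open Finset

lemma cast_ite01 {R : Type*} [Semiring R] (P : Prop) [Decidable P] :
    (((if P then 1 else 0 : ℕ)) : R) = if P then 1 else 0 := by split <;> simp

lemma sum_delta_mul {n dB : ℕ} (g0 : GI n dB) (F : GI n dB → ℕ) :
    ∑ g : GI n dB, (if g = g0 then 1 else 0) * F g = F g0 := by
  have h : ∀ g, (if g = g0 then 1 else 0) * F g = if g = g0 then F g else 0 := by
    intro g; split <;> simp
  rw [Finset.sum_congr rfl fun g _ => h g, Finset.sum_ite_eq' Finset.univ g0 F,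
    if_pos (Finset.mem_univ _)]

variable {n dB : ℕ}

/-- weights of a middle gate -/
def midW (c2g : GI n dB → ZMod 2) (c3g : GI n dB → ZMod 3) (g0 : GI n dB) (w : ℕ) :
    GI n dB → ℕ :=
  fun g => if w = 6 then (if g = g0 then 1 else 0)
    else 3*(c2g g).val + 4*(c3g g).val + w*(if g = g0 then 1 else 0)

def midC (w : ℕ) : ℕ := if w = 6 then 5 else 0

def midNat (c2g : GI n dB → ZMod 2) (c3g : GI n dB → ZMod 3) (g0 : GI n dB) (w : ℕ)
    (x : Fin n → Bool) : ℕ :=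
  if 6 ∣ midC w + ∑ g : GI n dB, midW c2g c3g g0 w g * gEval g x then 1 else 0

lemma midNat_split (c2g : GI n dB → ZMod 2) (c3g : GI n dB → ZMod 3) (g0 : GI n dB)
    (w : ℕ) (hw : w ≤ 5) (x : Fin n → Bool) :
    midNat c2g c3g g0 w x =
      if 6 ∣ 3*(∑ g : GI n dB, (c2g g).val * gEval g x)
          + 4*(∑ g : GI n dB, (c3g g).val * gEval g x) + w * gEval g0 x then 1 else 0 := by
  unfold midNat midW midC
  rw [if_neg (by omega : ¬ w = 6)]
  have h : ∀ g : GI n dB, (if w = 6 then (if g = g0 then 1 else 0)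
        else 3*(c2g g).val + 4*(c3g g).val + w*(if g = g0 then 1 else 0)) * gEval g x
      = 3*((c2g g).val * gEval g x) + 4*((c3g g).val * gEval g x)
        + w*((if g = g0 then 1 else 0) * gEval g x) := by
    intro g
    rw [if_neg (by omega : ¬ w = 6)]
    ring
  rw [Finset.sum_congr rfl fun g _ => h g]
  rw [Finset.sum_add_distrib, Finset.sum_add_distrib, ← Finset.mul_sum, ← Finset.mul_sum,
    ← Finset.mul_sum, sum_delta_mul g0 (fun g => gEval g x)]
  rw [zero_add]

lemma midNat_copy (c2g : GI n dB → ZMod 2) (c3g : GI n dB → ZMod 3) (g0 : GI n dB)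
    (x : Fin n → Bool) :
    midNat c2g c3g g0 6 x = if 6 ∣ 5 + gEval g0 x then 1 else 0 := by
  unfold midNat midW midC
  rw [if_pos rfl]
  have h : ∀ g : GI n dB, (if (6:ℕ) = 6 then (if g = g0 then 1 else 0)
      else 3*(c2g g).val + 4*(c3g g).val + 6*(if g = g0 then 1 else 0)) * gEval g x
      = (if g = g0 then 1 else 0) * gEval g x := by
    intro g
    rw [if_pos rfl]
  rw [Finset.sum_congr rfl fun g _ => h g, sum_delta_mul g0 (fun g => gEval g x)]

lemma midNat_zero (c2g : GI n dB → ZMod 2) (c3g : GI n dB → ZMod 3) (g0 : GI n dB)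
    (x : Fin n → Bool) (P2 P3 : ℕ) (hP2 : P2 ≤ 1) (hP3 : P3 ≤ 1)
    (h2 : 2 ∣ (∑ g : GI n dB, (c2g g).val * gEval g x) ↔ P2 = 1)
    (h3 : 3 ∣ (∑ g : GI n dB, (c3g g).val * gEval g x) ↔ P3 = 1) :
    midNat c2g c3g g0 0 x = P2 * P3 := by
  rw [midNat_split c2g c3g g0 0 (by norm_num) x]
  set X := ∑ g : GI n dB, (c2g g).val * gEval g x with hX
  set Y := ∑ g : GI n dB, (c3g g).val * gEval g x with hY
  rw [zero_mul, add_zero]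
  by_cases hp2 : P2 = 1
  · by_cases hp3 : P3 = 1
    · rw [if_pos, hp2, hp3]
      have := h2.2 hp2
      have := h3.2 hp3
      omega
    · have hp30 : P3 = 0 := by omega
      rw [if_neg, hp30, Nat.mul_zero]
      intro hdvd
      exact hp3 (h3.1 (by omega))
  · have hp20 : P2 = 0 := by omega
    rw [if_neg, hp20, Nat.zero_mul]
    intro hdvd
    exact hp2 (h2.1 (by omega))

lemma midNat_trick (c2g : GI n dB → ZMod 2) (c3g : GI n dB → ZMod 3) (g0 : GI n dB)
    (x : Fin n → Bool) :
    ((gEval g0 x * midNat c2g c3g g0 0 x : ℕ) : ZMod 5)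
      = ((midNat c2g c3g g0 6 x : ℕ) : ZMod 5)
        - ∑ w ∈ Finset.range 5, ((midNat c2g c3g g0 (w+1) x : ℕ) : ZMod 5) := by
  set A0 := 3*(∑ g : GI n dB, (c2g g).val * gEval g x)
    + 4*(∑ g : GI n dB, (c3g g).val * gEval g x) with hA0
  set B := gEval g0 x with hB
  have hB1 : B ≤ 1 := gEval_le_one g0 x
  have h0 : midNat c2g c3g g0 0 x = if 6 ∣ A0 then 1 else 0 := by
    rw [midNat_split c2g c3g g0 0 (by norm_num) x, zero_mul, add_zero]
  have h6 : midNat c2g c3g g0 6 x = if 6 ∣ 5 + B then 1 else 0 := midNat_copy c2g c3g g0 x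
  have hw : ∀ w ∈ Finset.range 5, ((midNat c2g c3g g0 (w+1) x : ℕ) : ZMod 5)
      = if 6 ∣ A0 + (w+1)*B then 1 else 0 := by
    intro w hwr
    rw [midNat_split c2g c3g g0 (w+1) (by have := Finset.mem_range.1 hwr; omega) x]
    rw [cast_ite01]
  rw [h0, h6, Finset.sum_congr rfl hw]
  simp only [Nat.cast_mul, cast_ite01]
  exact trick A0 B hB1

end MidGates


lemma indN_eq_one_iff (M s t : ℕ) : indN M s t = 1 ↔ s % M = t % M := by
  unfold indN; split <;> simp_all

open Finset in
theorem main_build (n : ℕ) (hn : 1 ≤ n) (f : (Fin n → Bool) → Bool)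
    (hsym : ∀ x y : Fin n → Bool,
      (Finset.univ.filter fun k => x k = true).card =
        (Finset.univ.filter fun k => y k = true).card → f x = f y) :
    ∃ Ci : Depth3ModCircuit 5 6 5 n,
      (∀ x, Ci.eval x = f x) ∧
      (Ci.size ≤ (n+2)^(2*2^(Nat.clog 8 (n+1)) + 2*3^(Nat.clog 27 (n+1)) + 2*5^(Nat.clog 125 (n+1)) + 3)) ∧
      (∀ x, Ci.outSum x % 5 = 0 ∨ Ci.outSum x % 5 = 1) := by
  classical
  haveI inst2 : Fact (Nat.Prime 2) := ⟨Nat.prime_two⟩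
  haveI inst3 : Fact (Nat.Prime 3) := ⟨Nat.prime_three⟩
  haveI inst5 : Fact (Nat.Prime 5) := ⟨by norm_num⟩
  set a := Nat.clog 8 (n+1) with ha
  set b := Nat.clog 27 (n+1) with hb
  set c := Nat.clog 125 (n+1) with hc
  set q2 := 2^a with hq2d
  set q3 := 3^b with hq3d
  set q5 := 5^c with hq5d
  set dB := 2*q2 + 2*q3 + q5 with hdBd
  have hq2p : 0 < q2 := by rw [hq2d]; positivity
  have hq3p : 0 < q3 := by rw [hq3d]; positivity
  have hq5p : 0 < q5 := by rw [hq5d]; positivity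
  have hcube2 : n+1 ≤ q2^3 := by
    have h8 := Nat.le_pow_clog (by norm_num : (1:ℕ) < 8) (n+1)
    rw [← ha] at h8
    have heq : (8:ℕ)^a = q2^3 := by
      rw [hq2d, show (8:ℕ) = 2^3 by norm_num, ← pow_mul, ← pow_mul, Nat.mul_comm]
    omega
  have hcube3 : n+1 ≤ q3^3 := by
    have h27 := Nat.le_pow_clog (by norm_num : (1:ℕ) < 27) (n+1)
    rw [← hb] at h27
    have heq : (27:ℕ)^b = q3^3 := by
      rw [hq3d, show (27:ℕ) = 3^3 by norm_num, ← pow_mul, ← pow_mul, Nat.mul_comm]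
    omega
  have hcube5 : n+1 ≤ q5^3 := by
    have h125 := Nat.le_pow_clog (by norm_num : (1:ℕ) < 125) (n+1)
    rw [← hc] at h125
    have heq : (125:ℕ)^c = q5^3 := by
      rw [hq5d, show (125:ℕ) = 5^3 by norm_num, ← pow_mul, ← pow_mul, Nat.mul_comm]
    omega
  have hQn : n+1 ≤ q2*(q3*q5) := by
    have hcube : (n+1)^3 ≤ (q2*(q3*q5))^3 := by
      calc (n+1)^3 = (n+1)*((n+1)*(n+1)) := by ring
        _ ≤ q2^3*(q3^3*q5^3) := Nat.mul_le_mul hcube2 (Nat.mul_le_mul hcube3 hcube5)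
        _ = (q2*(q3*q5))^3 := by ring
    exact le_of_pow_le_pow_left₀ (by norm_num) (Nat.zero_le _) hcube
  have hq5small : q5 ≤ 5*(q2*q3) := by
    rcases Nat.eq_zero_or_pos c with hc0 | hcpos
    · rw [hq5d, hc0, pow_zero]
      have h1 : 1 ≤ q2*q3 := Nat.one_le_iff_ne_zero.2 (by positivity)
      omega
    · have hlt : 125^(c-1) < n+1 := by
        by_contra hcon
        push_neg at hcon
        have hcc : Nat.clog 125 (n+1) ≤ c-1 := (Nat.clog_le_iff_le_pow (by norm_num)).2 hcon
        rw [← hc] at hcc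
        omega
      have h5c3 : (5^(c-1))^3 < q2^3 := by
        have heq : (5^(c-1))^3 = 125^(c-1) := by
          rw [show (125:ℕ) = 5^3 by norm_num, ← pow_mul, ← pow_mul, Nat.mul_comm]
        omega
      have h5q2 : 5^(c-1) ≤ q2 := by
        by_contra hcon
        push_neg at hcon
        have := Nat.pow_lt_pow_left hcon (by norm_num : (3:ℕ) ≠ 0)
        omega
      have hq5eq : q5 = 5*5^(c-1) := by
        have h1 : q5 = 5^((c-1)+1) := by rw [hq5d, Nat.sub_add_cancel hcpos]
        rw [h1, pow_succ']
      have h2 : q2 ≤ q2*q3 := Nat.le_mul_of_pos_right q2 hq3p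
      omega
  have hco23 : Nat.Coprime q2 q3 := Nat.Coprime.pow a b (by decide)
  have hco25 : Nat.Coprime q2 q5 := Nat.Coprime.pow a c (by decide)
  have hco35 : Nat.Coprime q3 q5 := Nat.Coprime.pow b c (by decide)
  have hco52 : Nat.Coprime 5 q2 := Nat.Coprime.pow_right a (by decide)
  have hco53 : Nat.Coprime 5 q3 := Nat.Coprime.pow_right b (by decide)
  -- weight function
  set s : (Fin n → Bool) → ℕ := fun x => yUN Finset.univ x with hsdef
  have hs_filter : ∀ x, s x = (Finset.univ.filter fun k => x k = true).card :=
    fun x => yUN_eq_card_filter _ _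
  have hsle : ∀ x, s x ≤ n := by
    intro x
    have h := yUN_le (Finset.univ : Finset (Fin n)) x
    simpa [Finset.card_univ] using h
  set F : ℕ → Bool := fun t => f (fun i => decide ((i:ℕ) < t)) with hFdef
  have hfx : ∀ x, f x = F (s x) := by
    intro x
    apply hsym
    rw [← hs_filter x]
    have hcards := card_filter_val_lt n (s x) (hsle x)
    have : (Finset.univ.filter fun k : Fin n => (decide ((k:ℕ) < s x)) = true).card
        = (Finset.univ.filter fun i : Fin n => (i : ℕ) < s x).card := by
      simp [decide_eq_true_eq]
    omega
  -- spans mod 2 and mod 3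
  have hdvd2 : (5:ℕ) ∣ 2^4 - 1 := by norm_num
  have hdvd3 : (5:ℕ) ∣ 3^4 - 1 := by norm_num
  have hdeg2 : (2^a - 1) + (2^a - 1) ≤ dB := by omega
  have hdeg3 : (3^b - 1) + (3^b - 1) ≤ dB := by omega
  have hsp2 : ∀ (t : Fin (n+1)) (U : UI n (q5-1)),
      ∃ cg : GI n dB → ZMod 2, ∑ g : GI n dB, cg g • botFam n dB 2 g
        = (fun x => 1 - ((indN q2 (yUN Finset.univ x) t.val
            * indN q2 (yUN U.1 x) U.1.card : ℕ) : ZMod 2)) := by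
    intro t U
    apply (Submodule.mem_span_range_iff_exists_fun _).1
    refine Submodule.sub_mem _ (one_mem_span 2) ?_
    have h := prod_ind_mem_span 2 hdvd2 a t.val U.1 hdeg2
    rw [← hq2d] at h
    exact h
  have hsp3 : ∀ (t : Fin (n+1)) (U : UI n (q5-1)),
      ∃ cg : GI n dB → ZMod 3, ∑ g : GI n dB, cg g • botFam n dB 3 g
        = (fun x => 1 - ((indN q3 (yUN Finset.univ x) t.val
            * indN q3 (yUN U.1 x) U.1.card : ℕ) : ZMod 3)) := by
    intro t U
    apply (Submodule.mem_span_range_iff_exists_fun _).1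
    refine Submodule.sub_mem _ (one_mem_span 3) ?_
    have h := prod_ind_mem_span 3 hdvd3 b t.val U.1 hdeg3
    rw [← hq3d] at h
    exact h
  choose c2 hc2 using hsp2
  choose c3 hc3 using hsp3
  have hq5dB : q5 - 1 ≤ dB := by omega
  have hgBex : ∀ U : UI n (q5-1), ∃ g : GI n dB, ∀ x,
      gEval g x = if yUN U.1 x % 5 = U.1.card % 5 then 1 else 0 :=
    fun U => gate_realize U.1 (le_trans U.2 hq5dB) U.1.card
  choose gB hgB using hgBex
  have hBUchar : ∀ U x, gEval (gB U) x = indN 5 (yUN U.1 x) U.1.card := by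
    intro U x
    rw [hgB U x]
    rfl
  -- divisibility characterizations
  have h2iff : ∀ (t : Fin (n+1)) (U : UI n (q5-1)) x,
      (2 ∣ ∑ g : GI n dB, (c2 t U g).val * gEval g x)
        ↔ (indN q2 (yUN Finset.univ x) t.val * indN q2 (yUN U.1 x) U.1.card = 1) := by
    intro t U x
    set P := indN q2 (yUN Finset.univ x) t.val * indN q2 (yUN U.1 x) U.1.card with hPd
    have hPle : P ≤ 1 := by
      rw [hPd]
      simpa using Nat.mul_le_mul (indN_le_one _ _ _) (indN_le_one _ _ _)
    have hcast : ((∑ g : GI n dB, (c2 t U g).val * gEval g x : ℕ) : ZMod 2) = 1 - (P : ZMod 2) := by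
      have h := congrFun (hc2 t U) x
      rw [Finset.sum_apply] at h
      simp only [Pi.smul_apply, smul_eq_mul] at h
      rw [Nat.cast_sum]
      calc ∑ g : GI n dB, (((c2 t U g).val * gEval g x : ℕ) : ZMod 2)
          = ∑ g : GI n dB, (c2 t U g) * botFam n dB 2 g x := by
            refine Finset.sum_congr rfl fun g _ => ?_
            rw [Nat.cast_mul, ZMod.natCast_val, ZMod.cast_id]
            rfl
        _ = 1 - (P:ZMod 2) := by rw [h]
    rw [← ZMod.natCast_eq_zero_iff _ 2, hcast]
    interval_cases P
    · simp
    · simp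
  have h3iff : ∀ (t : Fin (n+1)) (U : UI n (q5-1)) x,
      (3 ∣ ∑ g : GI n dB, (c3 t U g).val * gEval g x)
        ↔ (indN q3 (yUN Finset.univ x) t.val * indN q3 (yUN U.1 x) U.1.card = 1) := by
    intro t U x
    set P := indN q3 (yUN Finset.univ x) t.val * indN q3 (yUN U.1 x) U.1.card with hPd
    have hPle : P ≤ 1 := by
      rw [hPd]
      simpa using Nat.mul_le_mul (indN_le_one _ _ _) (indN_le_one _ _ _)
    have hcast : ((∑ g : GI n dB, (c3 t U g).val * gEval g x : ℕ) : ZMod 3) = 1 - (P : ZMod 3) := by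
      have h := congrFun (hc3 t U) x
      rw [Finset.sum_apply] at h
      simp only [Pi.smul_apply, smul_eq_mul] at h
      rw [Nat.cast_sum]
      calc ∑ g : GI n dB, (((c3 t U g).val * gEval g x : ℕ) : ZMod 3)
          = ∑ g : GI n dB, (c3 t U g) * botFam n dB 3 g x := by
            refine Finset.sum_congr rfl fun g _ => ?_
            rw [Nat.cast_mul, ZMod.natCast_val, ZMod.cast_id]
            rfl
        _ = 1 - (P:ZMod 3) := by rw [h]
    rw [← ZMod.natCast_eq_zero_iff _ 3, hcast]
    interval_cases P
    · simp
    · simp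
  have hmid0 : ∀ (t : Fin (n+1)) (U : UI n (q5-1)) x,
      midNat (c2 t U) (c3 t U) (gB U) 0 x
        = (indN q2 (yUN Finset.univ x) t.val * indN q2 (yUN U.1 x) U.1.card)
          * (indN q3 (yUN Finset.univ x) t.val * indN q3 (yUN U.1 x) U.1.card) :=
    fun t U x => midNat_zero _ _ _ x _ _
      (by simpa using Nat.mul_le_mul (indN_le_one _ _ _) (indN_le_one _ _ _))
      (by simpa using Nat.mul_le_mul (indN_le_one _ _ _) (indN_le_one _ _ _))
      (h2iff t U x) (h3iff t U x)
  -- key ℕ-level product identity per U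
  have hPWU : ∀ (t : Fin (n+1)) (U : UI n (q5-1)) x,
      gEval (gB U) x * midNat (c2 t U) (c3 t U) (gB U) 0 x
        = monoN U.1 x * (indN q2 (s x) t.val * indN q3 (s x) t.val) := by
    intro t U x
    rw [hBUchar U x, hmid0 t U x]
    have hyu : yUN U.1 x ≤ U.1.card := yUN_le U.1 x
    have hulim : U.1.card < 5*q2*q3 := by
      have h1 : U.1.card ≤ q5 - 1 := U.2
      have h2 : 5*(q2*q3) = 5*q2*q3 := by ring
      omega
    have hkey : indN 5 (yUN U.1 x) U.1.card
        * (indN q2 (yUN U.1 x) U.1.card * indN q3 (yUN U.1 x) U.1.card) = monoN U.1 x := by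
      rw [monoN_eq]
      by_cases hy : yUN U.1 x = U.1.card
      · rw [if_pos hy, hy]
        simp [indN]
      · rw [if_neg hy]
        by_contra hne
        have e5 := indN_le_one 5 (yUN U.1 x) U.1.card
        have e2 := indN_le_one q2 (yUN U.1 x) U.1.card
        have e3 := indN_le_one q3 (yUN U.1 x) U.1.card
        have h5 : indN 5 (yUN U.1 x) U.1.card = 1 := by
          rcases Nat.lt_or_ge (indN 5 (yUN U.1 x) U.1.card) 1 with h | h
          · exfalso; apply hne
            have h0 : indN 5 (yUN U.1 x) U.1.card = 0 := by omega
            rw [h0]; ring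
          · omega
        have h2 : indN q2 (yUN U.1 x) U.1.card = 1 := by
          rcases Nat.lt_or_ge (indN q2 (yUN U.1 x) U.1.card) 1 with h | h
          · exfalso; apply hne
            have : indN q2 (yUN U.1 x) U.1.card = 0 := by omega
            rw [this]
            ring
          · omega
        have h3 : indN q3 (yUN U.1 x) U.1.card = 1 := by
          rcases Nat.lt_or_ge (indN q3 (yUN U.1 x) U.1.card) 1 with h | h
          · exfalso; apply hne
            have : indN q3 (yUN U.1 x) U.1.card = 0 := by omega
            rw [this]
            ring
          · omega
        refine hy (crt3 (m1 := 5) (m2 := q2) (m3 := q3) hco52 hco53 hco23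
          ((indN_eq_one_iff _ _ _).1 h5) ((indN_eq_one_iff _ _ _).1 h2)
          ((indN_eq_one_iff _ _ _).1 h3) (by omega) (by omega))
    calc indN 5 (yUN U.1 x) U.1.card
          * ((indN q2 (yUN Finset.univ x) t.val * indN q2 (yUN U.1 x) U.1.card)
            * (indN q3 (yUN Finset.univ x) t.val * indN q3 (yUN U.1 x) U.1.card))
        = (indN 5 (yUN U.1 x) U.1.card
            * (indN q2 (yUN U.1 x) U.1.card * indN q3 (yUN U.1 x) U.1.card))
          * (indN q2 (yUN Finset.univ x) t.val * indN q3 (yUN Finset.univ x) t.val) := by ring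
      _ = monoN U.1 x * (indN q2 (s x) t.val * indN q3 (s x) t.val) := by rw [hkey, hsdef]
  -- mod-5 digits
  have hγ5ex := fun t : ℕ => ind_expand 5 c t
  choose γ5 hγ5 using hγ5ex
  simp only [← hq5d] at hγ5
  -- CRT for the weight
  have hcrt_s : ∀ (t : Fin (n+1)) x,
      indN q5 (s x) t.val * (indN q2 (s x) t.val * indN q3 (s x) t.val)
        = if s x = t.val then 1 else 0 := by
    intro t x
    by_cases hst : s x = t.val
    · rw [if_pos hst, hst]
      simp [indN]
    · rw [if_neg hst]
      by_contra hne
      have e5 := indN_le_one q5 (s x) t.val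
      have e2 := indN_le_one q2 (s x) t.val
      have e3 := indN_le_one q3 (s x) t.val
      have h5 : indN q5 (s x) t.val = 1 := by
        rcases Nat.lt_or_ge (indN q5 (s x) t.val) 1 with h | h
        · exfalso; apply hne
          have h0 : indN q5 (s x) t.val = 0 := by omega
          rw [h0]; ring
        · omega
      have h2 : indN q2 (s x) t.val = 1 := by
        rcases Nat.lt_or_ge (indN q2 (s x) t.val) 1 with h | h
        · exfalso; apply hne
          have h0 : indN q2 (s x) t.val = 0 := by omega
          rw [h0]; ring
        · omega
      have h3 : indN q3 (s x) t.val = 1 := by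
        rcases Nat.lt_or_ge (indN q3 (s x) t.val) 1 with h | h
        · exfalso; apply hne
          have h0 : indN q3 (s x) t.val = 0 := by omega
          rw [h0]; ring
        · omega
      have hslt : s x < q2*q3*q5 := by
        have h1 := hsle x
        have heq : q2*(q3*q5) = q2*q3*q5 := by ring
        omega
      have htlt : t.val < q2*q3*q5 := by
        have h1 := t.2
        have heq : q2*(q3*q5) = q2*q3*q5 := by ring
        omega
      exact hst (crt3 (m1 := q2) (m2 := q3) (m3 := q5) hco23 hco25 hco35
        ((indN_eq_one_iff _ _ _).1 h2) ((indN_eq_one_iff _ _ _).1 h3)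
        ((indN_eq_one_iff _ _ _).1 h5) hslt htlt)
  -- middle-gate family
  set midFam : (Fin (n+1) × UI n (q5-1) × Fin 7) → (Fin n → Bool) → ZMod 5 :=
    fun i x => ((midNat (c2 i.1 i.2.1) (c3 i.1 i.2.1) (gB i.2.1) ((i.2.2 : Fin 7) : ℕ) x : ℕ) : ZMod 5)
    with hmidFamd
  set wfin : ℕ → Fin 7 := fun w => ⟨(w+1) % 7, Nat.mod_lt _ (by norm_num)⟩ with hwfind
  have hEspan : ∀ t : Fin (n+1),
      (fun x => if s x = t.val then (1 : ZMod 5) else 0)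
        ∈ Submodule.span (ZMod 5) (Set.range midFam) := by
    intro t
    have hfun : (fun x => if s x = t.val then (1:ZMod 5) else 0)
        = ∑ U : UI n (q5-1), (γ5 t.val U.1.card) •
            (midFam (t, U, (6 : Fin 7))
              - ∑ w ∈ Finset.range 5, midFam (t, U, wfin w)) := by
      funext x
      rw [Finset.sum_apply]
      simp only [Pi.smul_apply, Pi.sub_apply, Finset.sum_apply, smul_eq_mul]
      have hterm : ∀ U : UI n (q5-1),
          midFam (t, U, (6:Fin 7)) x
              - ∑ w ∈ Finset.range 5, midFam (t, U, wfin w) x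
            = ((gEval (gB U) x * midNat (c2 t U) (c3 t U) (gB U) 0 x : ℕ) : ZMod 5) := by
        intro U
        have h6 : midFam (t, U, (6:Fin 7)) x
            = ((midNat (c2 t U) (c3 t U) (gB U) 6 x : ℕ) : ZMod 5) := rfl
        have hws : ∀ w ∈ Finset.range 5, midFam (t, U, wfin w) x
            = ((midNat (c2 t U) (c3 t U) (gB U) (w+1) x : ℕ) : ZMod 5) := by
          intro w hw
          have hw5 : w + 1 < 7 := by have := Finset.mem_range.1 hw; omega
          show ((midNat (c2 t U) (c3 t U) (gB U) ((w+1) % 7) x : ℕ) : ZMod 5) = _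
          rw [Nat.mod_eq_of_lt hw5]
        rw [h6, Finset.sum_congr rfl hws]
        exact (midNat_trick (c2 t U) (c3 t U) (gB U) x).symm
      rw [Finset.sum_congr rfl (fun U _ => by rw [hterm U])]
      have hchain : ∑ U : UI n (q5-1), γ5 t.val U.1.card
            * ((gEval (gB U) x * midNat (c2 t U) (c3 t U) (gB U) 0 x : ℕ) : ZMod 5)
          = (∑ U : UI n (q5-1), γ5 t.val U.1.card * ((monoN U.1 x : ℕ):ZMod 5))
              * ((indN q2 (s x) t.val * indN q3 (s x) t.val : ℕ) : ZMod 5) := by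
        rw [Finset.sum_mul]
        refine Finset.sum_congr rfl fun U _ => ?_
        rw [hPWU t U x]
        push_cast
        ring
      rw [hchain]
      have hUsum : (∑ U : UI n (q5-1), γ5 t.val U.1.card * ((monoN U.1 x : ℕ):ZMod 5))
          = ∑ u ∈ Finset.range q5, γ5 t.val u * (((s x).choose u : ℕ) : ZMod 5) := by
        rw [← Finset.sum_subtype
          ((Finset.univ : Finset (Finset (Fin n))).filter (fun U => U.card ≤ q5-1))
          (by intro U; simp) (fun U => γ5 t.val U.card * ((monoN U x : ℕ):ZMod 5))]
        have hmaps : ∀ U ∈ (Finset.univ : Finset (Finset (Fin n))).filter (fun U => U.card ≤ q5-1),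
            U.card ∈ Finset.range q5 := by
          intro U hU
          rw [Finset.mem_filter] at hU
          exact Finset.mem_range.2 (by omega)
        rw [← Finset.sum_fiberwise_of_maps_to hmaps
          (fun U => γ5 t.val U.card * ((monoN U x : ℕ):ZMod 5))]
        refine Finset.sum_congr rfl fun u hu => ?_
        have hu5 : u < q5 := Finset.mem_range.1 hu
        have hfeq : (((Finset.univ : Finset (Finset (Fin n))).filter
              (fun U => U.card ≤ q5-1)).filter (fun U => U.card = u))
            = Finset.powersetCard u (Finset.univ : Finset (Fin n)) := by
          ext U
          simp only [Finset.mem_filter, Finset.mem_univ, true_and,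
            Finset.mem_powersetCard_univ]
          constructor
          · rintro ⟨_, hc⟩; exact hc
          · intro hc; exact ⟨by omega, hc⟩
        rw [hfeq]
        have hconst : ∀ U ∈ Finset.powersetCard u (Finset.univ : Finset (Fin n)),
            γ5 t.val U.card * ((monoN U x : ℕ):ZMod 5)
              = γ5 t.val u * ((monoN U x : ℕ):ZMod 5) := by
          intro U hU
          rw [Finset.mem_powersetCard_univ.1 hU]
        rw [Finset.sum_congr rfl hconst, ← Finset.mul_sum, ← Nat.cast_sum, sum_monoN,
          ← hs_filter x]
      rw [hUsum]
      have hind5 : ∑ u ∈ Finset.range q5, γ5 t.val u * (((s x).choose u : ℕ):ZMod 5)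
          = ((indN q5 (s x) t.val : ℕ) : ZMod 5) := by
        have hcast : ((indN q5 (s x) t.val : ℕ):ZMod 5)
            = (if (s x) % q5 = t.val % q5 then (1:ZMod 5) else 0) := by
          unfold indN
          exact cast_ite01 _
        rw [hcast, hγ5 t.val (s x)]
        refine Finset.sum_congr rfl fun u _ => ?_
        push_cast
        ring
      rw [hind5, ← Nat.cast_mul, hcrt_s t x, cast_ite01]
    rw [hfun]
    exact Submodule.sum_mem _ fun U _ => Submodule.smul_mem _ _
      (Submodule.sub_mem _ (Submodule.subset_span ⟨(t,U,6), rfl⟩)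
        (Submodule.sum_mem _ fun w _ =>
          Submodule.subset_span ⟨(t,U,wfin w), rfl⟩))
  have hT : (fun x => if f x then (0:ZMod 5) else 1)
      ∈ Submodule.span (ZMod 5) (Set.range midFam) := by
    have hfun : (fun x => if f x then (0:ZMod 5) else 1)
        = ∑ t : Fin (n+1), (if F t.val then (0:ZMod 5) else 1)
            • (fun x => if s x = t.val then (1:ZMod 5) else 0) := by
      funext x
      rw [Finset.sum_apply]
      simp only [Pi.smul_apply, smul_eq_mul]
      rw [Finset.sum_eq_single (⟨s x, Nat.lt_succ_of_le (hsle x)⟩ : Fin (n+1))]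
      · have h1 : (if s x = ((⟨s x, Nat.lt_succ_of_le (hsle x)⟩ : Fin (n+1)) : Fin (n+1)).val
            then (1:ZMod 5) else 0) = 1 := if_pos rfl
        rw [h1, mul_one, hfx x]
      · intro t _ hne
        have h0 : (if s x = t.val then (1:ZMod 5) else 0) = 0 :=
          if_neg (fun h => hne (Fin.ext h.symm))
        rw [h0, mul_zero]
      · intro h
        exact absurd (Finset.mem_univ _) h
    rw [hfun]
    exact Submodule.sum_mem _ fun t _ => Submodule.smul_mem _ _ (hEspan t)
  obtain ⟨cT, hcT⟩ := (Submodule.mem_span_range_iff_exists_fun _).1 hT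
  -- build the circuit
  set eB := Fintype.equivFin (GI n dB) with heBd
  set eM := Fintype.equivFin (Fin (n+1) × UI n (q5-1) × Fin 7) with heMd
  set Ci : Depth3ModCircuit 5 6 5 n :=
    { numBot := Fintype.card (GI n dB),
      numMid := Fintype.card (Fin (n+1) × UI n (q5-1) × Fin 7),
      botConst := fun k => gConst (eB.symm k),
      botCoeff := fun k i => gCoeff (eB.symm k) i,
      midConst := fun j => midC (((eM.symm j).2.2 : Fin 7) : ℕ),
      midCoeff := fun j k => midW (c2 (eM.symm j).1 (eM.symm j).2.1)
        (c3 (eM.symm j).1 (eM.symm j).2.1) (gB (eM.symm j).2.1)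
        (((eM.symm j).2.2 : Fin 7) : ℕ) (eB.symm k),
      outConst := 0,
      outCoeff := fun j => (cT (eM.symm j)).val } with hCid
  have hbotEval : ∀ k x, Ci.botEval k x = gEval (eB.symm k) x := by
    intro k x
    unfold Depth3ModCircuit.botEval gEval biN
    rfl
  have hmidEval : ∀ j x, Ci.midEval j x
      = midNat (c2 (eM.symm j).1 (eM.symm j).2.1) (c3 (eM.symm j).1 (eM.symm j).2.1)
          (gB (eM.symm j).2.1) (((eM.symm j).2.2 : Fin 7) : ℕ) x := by
    intro j x
    unfold Depth3ModCircuit.midEval midNat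
    have hsum : ∑ k, Ci.midCoeff j k * Ci.botEval k x
        = ∑ g : GI n dB, midW (c2 (eM.symm j).1 (eM.symm j).2.1)
            (c3 (eM.symm j).1 (eM.symm j).2.1) (gB (eM.symm j).2.1)
            (((eM.symm j).2.2 : Fin 7) : ℕ) g * gEval g x := by
      rw [← Equiv.sum_comp eB.symm (fun g => midW (c2 (eM.symm j).1 (eM.symm j).2.1)
        (c3 (eM.symm j).1 (eM.symm j).2.1) (gB (eM.symm j).2.1)
        (((eM.symm j).2.2 : Fin 7) : ℕ) g * gEval g x)]
      refine Finset.sum_congr rfl fun k _ => ?_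
      rw [← hbotEval k x]
    rw [hsum]
  have houtSum : ∀ x, ((Ci.outSum x : ℕ) : ZMod 5) = (if f x then (0:ZMod 5) else 1) := by
    intro x
    unfold Depth3ModCircuit.outSum
    have h0 : Ci.outConst = 0 := rfl
    rw [h0, zero_add, Nat.cast_sum]
    have hstep : ∀ j, ((Ci.outCoeff j * Ci.midEval j x : ℕ) : ZMod 5)
        = cT (eM.symm j) * midFam (eM.symm j) x := by
      intro j
      rw [Nat.cast_mul]
      have h1 : ((Ci.outCoeff j : ℕ) : ZMod 5) = cT (eM.symm j) := by
        show (((cT (eM.symm j)).val : ℕ) : ZMod 5) = cT (eM.symm j)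
        rw [ZMod.natCast_val, ZMod.cast_id]
      rw [h1, hmidEval j x]
    rw [Finset.sum_congr rfl fun j _ => hstep j]
    rw [Equiv.sum_comp eM.symm (fun i => cT i * midFam i x)]
    have := congrFun hcT x
    rw [Finset.sum_apply] at this
    simp only [Pi.smul_apply, smul_eq_mul] at this
    exact this
  refine ⟨Ci, ?_, ?_, ?_⟩
  · -- correctness
    intro x
    by_cases hf : f x = true
    · have hz : ((Ci.outSum x : ℕ):ZMod 5) = 0 := by rw [houtSum x, if_pos hf]
      have hdv : (5:ℕ) ∣ Ci.outSum x := (ZMod.natCast_eq_zero_iff _ 5).1 hz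
      show decide ((5:ℕ) ∣ Ci.outSum x) = f x
      rw [hf]
      exact decide_eq_true hdv
    · have hz : ((Ci.outSum x : ℕ):ZMod 5) = 1 := by
        rw [houtSum x, if_neg hf]
      have hdv : ¬ (5:ℕ) ∣ Ci.outSum x := by
        intro hd
        rw [(ZMod.natCast_eq_zero_iff _ 5).2 hd] at hz
        exact one_ne_zero hz.symm
      have hfx0 : f x = false := by
        cases hcase : f x
        · rfl
        · exact absurd hcase hf
      show decide ((5:ℕ) ∣ Ci.outSum x) = f x
      rw [hfx0]
      exact decide_eq_false hdv
  · -- size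
    have hsize : Ci.size = Fintype.card (GI n dB)
        + Fintype.card (Fin (n+1) × UI n (q5-1) × Fin 7) + 1 := rfl
    have hcardB : Fintype.card (GI n dB) = 5 * (n+1)^dB := by
      simp [GI, Fintype.card_fun]
    have hcardM : Fintype.card (Fin (n+1) × UI n (q5-1) × Fin 7)
        = (n+1) * (Fintype.card (UI n (q5-1)) * 7) := by
      simp
    have hUle := card_UI_le n (q5-1)
    have hnn : (2:ℕ) ≤ n+2 := by omega
    have hE1 : 5*(n+1)^dB ≤ (n+2)^(dB+2) := by
      calc 5*(n+1)^dB ≤ (n+2)^2 * (n+2)^dB := by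
            refine Nat.mul_le_mul ?_ (Nat.pow_le_pow_left (by omega) dB)
            calc (5:ℕ) ≤ 3^2 := by norm_num
              _ ≤ (n+2)^2 := Nat.pow_le_pow_left (by omega) 2
        _ = (n+2)^(dB+2) := by rw [← pow_add]; ring_nf
    have hE2 : (n+1) * (Fintype.card (UI n (q5-1)) * 7) ≤ (n+2)^(q5+2) := by
      calc (n+1) * (Fintype.card (UI n (q5-1)) * 7)
          ≤ (n+2) * ((n+1)^(q5-1) * (n+2)^2) := by
            refine Nat.mul_le_mul (by omega) (Nat.mul_le_mul hUle ?_)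
            calc (7:ℕ) ≤ 3^2 := by norm_num
              _ ≤ (n+2)^2 := Nat.pow_le_pow_left (by omega) 2
        _ ≤ (n+2) * ((n+2)^(q5-1) * (n+2)^2) := by
            refine Nat.mul_le_mul_left _ (Nat.mul_le_mul_right _
              (Nat.pow_le_pow_left (by omega) _))
        _ = (n+2)^(1 + (q5-1) + 2) := by rw [pow_add, pow_add, pow_one]; ring
        _ ≤ (n+2)^(q5+2) := Nat.pow_le_pow_right (by omega) (by omega)
    have hmono1 : (n+2)^(dB+2) ≤ (n+2)^(dB+q5+2) := Nat.pow_le_pow_right (by omega) (by omega)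
    have hmono2 : (n+2)^(q5+2) ≤ (n+2)^(dB+q5+2) := Nat.pow_le_pow_right (by omega) (by omega)
    have hmono3 : 1 ≤ (n+2)^(dB+q5+2) := Nat.one_le_pow _ _ (by omega)
    have hfinal : Ci.size ≤ 3*(n+2)^(dB+q5+2) := by
      rw [hsize, hcardB, hcardM]
      omega
    have hlast : 3*(n+2)^(dB+q5+2) ≤ (n+2)^(dB+q5+3) := by
      have : (n+2)^(dB+q5+3) = (n+2) * (n+2)^(dB+q5+2) := by
        rw [← pow_succ']
      rw [this]
      exact Nat.mul_le_mul_right _ (by omega)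
    have hexp : 2*q2 + 2*q3 + 2*q5 + 3 = dB + q5 + 3 := by omega
    calc Ci.size ≤ 3*(n+2)^(dB+q5+2) := hfinal
      _ ≤ (n+2)^(dB+q5+3) := hlast
      _ = (n+2)^(2*q2 + 2*q3 + 2*q5 + 3) := by rw [hexp]
  · -- output residues
    intro x
    by_cases hf : f x = true
    · left
      have hz : ((Ci.outSum x : ℕ):ZMod 5) = 0 := by rw [houtSum x, if_pos hf]
      have hdv : (5:ℕ) ∣ Ci.outSum x := (ZMod.natCast_eq_zero_iff _ 5).1 hz
      omega
    · right
      have hz : ((Ci.outSum x % 5 : ℕ):ZMod 5) = 1 := by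
        rw [ZMod.natCast_mod, houtSum x, if_neg hf]
      have hr5 : Ci.outSum x % 5 < 5 := Nat.mod_lt _ (by norm_num)
      calc Ci.outSum x % 5 = ((Ci.outSum x % 5 : ℕ) : ZMod 5).val :=
            (ZMod.val_cast_of_lt hr5).symm
        _ = (1 : ZMod 5).val := by rw [hz]
        _ = 1 := rfl

end SymAux

namespace SymAux

lemma cube_root_bound {x y : ℝ} (hx : 0 ≤ x) (h : x^3 ≤ y) : x ≤ y^((1:ℝ)/3) := by
  have hy : (0:ℝ) ≤ y := le_trans (by positivity) h
  have h1 : x = (x^(3:ℕ))^((1:ℝ)/3) := by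
    rw [← Real.rpow_natCast x 3, ← Real.rpow_mul hx]
    norm_num
  rw [h1]
  exact Real.rpow_le_rpow (by positivity) h (by norm_num)

lemma pow_clog_cube_le (p : ℕ) (hp : 2 ≤ p) (n : ℕ) :
    (p^(Nat.clog (p^3) (n+1)))^3 ≤ p^3*(n+2) := by
  set a := Nat.clog (p^3) (n+1) with ha
  have hp3 : 1 < p^3 := lt_of_lt_of_le (by norm_num) (Nat.pow_le_pow_left hp 3)
  rcases Nat.eq_zero_or_pos a with h0 | hpos
  · rw [h0, pow_zero, one_pow]
    have h1 : 1 ≤ p^3 := Nat.one_le_pow _ _ (by omega)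
    nlinarith
  · have hlt : (p^3)^(a-1) < n+1 := by
      by_contra hcon
      push_neg at hcon
      have hcc : Nat.clog (p^3) (n+1) ≤ a-1 := (Nat.clog_le_iff_le_pow hp3).2 hcon
      omega
    have heq : (p^a)^3 = (p^3)^a := by
      rw [← pow_mul, ← pow_mul, Nat.mul_comm]
    have heq2 : (p^3)^a = (p^3) * (p^3)^(a-1) := by
      rw [← pow_succ']
      congr 1
      omega
    calc (p^a)^3 = (p^3)*(p^3)^(a-1) := by rw [heq, heq2]
      _ ≤ (p^3)*(n+1) := Nat.mul_le_mul_left _ (by omega)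
      _ ≤ (p^3)*(n+2) := Nat.mul_le_mul_left _ (by omega)

lemma qfactor_real_bound (p : ℕ) (hp : 2 ≤ p) (n : ℕ) :
    ((p^(Nat.clog (p^3) (n+1)) : ℕ) : ℝ) ≤ (p:ℝ) * ((n:ℝ)+2)^((1:ℝ)/3) := by
  have hnat := pow_clog_cube_le p hp n
  have hreal : (((p^(Nat.clog (p^3) (n+1)) : ℕ) : ℝ))^3 ≤ ((p:ℝ))^3 * ((n:ℝ)+2) := by
    have := Nat.cast_le (α := ℝ).2 hnat
    push_cast at this
    exact_mod_cast this
  have h1 := cube_root_bound (by positivity : (0:ℝ) ≤ ((p^(Nat.clog (p^3) (n+1)) : ℕ) : ℝ)) hreal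
  calc ((p^(Nat.clog (p^3) (n+1)) : ℕ) : ℝ)
      ≤ (((p:ℝ))^3 * ((n:ℝ)+2))^((1:ℝ)/3) := h1
    _ = (p:ℝ) * ((n:ℝ)+2)^((1:ℝ)/3) := by
        rw [Real.mul_rpow (by positivity) (by positivity)]
        congr 1
        rw [← Real.rpow_natCast (p:ℝ) 3, ← Real.rpow_mul (by positivity)]
        norm_num

end SymAux

/-- There is a constant `C` such that every symmetric function on `n ≥ 1` bits is computed
by a depth-3 `MOD_5 ∘ MOD_6 ∘ MOD_5` circuit of size at most `2^{C·n^{1/3}·log(n+2)}`,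
whose output linear combination is always `0` or `1` modulo `5`. -/
theorem symmetric_function_depth3_mod5_mod6_mod5 :
    ∃ C : ℝ, ∀ n : ℕ, 1 ≤ n → ∀ f : (Fin n → Bool) → Bool,
      (∀ x y : Fin n → Bool,
        (Finset.univ.filter fun k => x k = true).card =
          (Finset.univ.filter fun k => y k = true).card → f x = f y) →
      ∃ Ci : Depth3ModCircuit 5 6 5 n,
        (∀ x, Ci.eval x = f x) ∧
        ((Ci.size : ℝ) ≤ 2 ^ (C * (n : ℝ) ^ ((1 : ℝ) / 3) * Real.log ((n : ℝ) + 2))) ∧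
        (∀ x, Ci.outSum x % 5 = 0 ∨ Ci.outSum x % 5 = 1) := by
  refine ⟨100, fun n hn f hsym => ?_⟩
  obtain ⟨Ci, hev, hsz, hout⟩ := SymAux.main_build n hn f hsym
  refine ⟨Ci, hev, ?_, hout⟩
  set E := 2*2^(Nat.clog 8 (n+1)) + 2*3^(Nat.clog 27 (n+1)) + 2*5^(Nat.clog 125 (n+1)) + 3 with hE
  have hN1 : (1:ℝ) ≤ (n:ℝ) := by exact_mod_cast hn
  have hβpos : (0:ℝ) < (n:ℝ)+2 := by linarith
  have hβ1 : (1:ℝ) < (n:ℝ)+2 := by linarith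
  -- real bound on E
  have h2R : ((2^(Nat.clog 8 (n+1)) : ℕ) : ℝ) ≤ 2 * ((n:ℝ)+2)^((1:ℝ)/3) := by
    have := SymAux.qfactor_real_bound 2 (by norm_num) n
    norm_num at this ⊢
    exact this
  have h3R : ((3^(Nat.clog 27 (n+1)) : ℕ) : ℝ) ≤ 3 * ((n:ℝ)+2)^((1:ℝ)/3) := by
    have := SymAux.qfactor_real_bound 3 (by norm_num) n
    norm_num at this ⊢
    exact this
  have h5R : ((5^(Nat.clog 125 (n+1)) : ℕ) : ℝ) ≤ 5 * ((n:ℝ)+2)^((1:ℝ)/3) := by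
    have := SymAux.qfactor_real_bound 5 (by norm_num) n
    norm_num at this ⊢
    exact this
  have hroot1 : (1:ℝ) ≤ ((n:ℝ)+2)^((1:ℝ)/3) := by
    apply Real.one_le_rpow (by linarith) (by norm_num)
  have hER : (E : ℝ) ≤ 23 * ((n:ℝ)+2)^((1:ℝ)/3) := by
    have hEcast : (E:ℝ) = 2*((2^(Nat.clog 8 (n+1)) : ℕ):ℝ)
        + 2*((3^(Nat.clog 27 (n+1)) : ℕ):ℝ) + 2*((5^(Nat.clog 125 (n+1)) : ℕ):ℝ) + 3 := by
      rw [hE]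
      push_cast
      ring
    rw [hEcast]
    nlinarith [hroot1]
  have hcube3n : ((n:ℝ)+2)^((1:ℝ)/3) ≤ 2 * (n:ℝ)^((1:ℝ)/3) := by
    have h1 : ((n:ℝ)+2) ≤ 8*(n:ℝ) := by linarith
    have h2 : ((n:ℝ)+2)^((1:ℝ)/3) ≤ (8*(n:ℝ))^((1:ℝ)/3) :=
      Real.rpow_le_rpow (by linarith) h1 (by norm_num)
    have h3 : ((8:ℝ)*(n:ℝ))^((1:ℝ)/3) = 2 * (n:ℝ)^((1:ℝ)/3) := by
      rw [Real.mul_rpow (by norm_num) (by linarith)]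
      congr 1
      rw [show (8:ℝ) = 2^(3:ℕ) by norm_num, ← Real.rpow_natCast 2 3,
        ← Real.rpow_mul (by norm_num)]
      norm_num
    linarith
  have hEfinal : (E:ℝ) ≤ 46 * (n:ℝ)^((1:ℝ)/3) := by nlinarith [hER, hcube3n, hroot1]
  -- assemble
  have hszR : (Ci.size : ℝ) ≤ ((n:ℝ)+2)^(E:ℕ) := by
    have := Nat.cast_le (α := ℝ).2 hsz
    calc (Ci.size : ℝ) ≤ (((n+2)^E : ℕ) : ℝ) := this
      _ = ((n:ℝ)+2)^(E:ℕ) := by push_cast; ring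
  have hrpow : ((n:ℝ)+2)^(E:ℕ) = ((n:ℝ)+2)^((E:ℕ):ℝ) := (Real.rpow_natCast _ E).symm
  have hlogpos : (0:ℝ) < Real.log ((n:ℝ)+2) := Real.log_pos hβ1
  have hlog2 : (0.6931471803:ℝ) < Real.log 2 := Real.log_two_gt_d9
  have hmain : ((n:ℝ)+2)^((E:ℕ):ℝ) ≤ 2 ^ (100 * (n:ℝ)^((1:ℝ)/3) * Real.log ((n:ℝ)+2)) := by
    rw [Real.rpow_def_of_pos hβpos, Real.rpow_def_of_pos (by norm_num : (0:ℝ) < 2)]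
    apply Real.exp_le_exp.2
    have hkey : (E:ℝ) ≤ Real.log 2 * (100 * (n:ℝ)^((1:ℝ)/3)) := by
      have hr0 : (0:ℝ) ≤ (n:ℝ)^((1:ℝ)/3) := Real.rpow_nonneg (by linarith) _
      nlinarith [hEfinal, hlog2, hr0]
    calc Real.log ((n:ℝ)+2) * (E:ℝ)
        ≤ Real.log ((n:ℝ)+2) * (Real.log 2 * (100 * (n:ℝ)^((1:ℝ)/3))) := by
          exact mul_le_mul_of_nonneg_left hkey (le_of_lt hlogpos)
      _ = Real.log 2 * (100 * (n:ℝ)^((1:ℝ)/3) * Real.log ((n:ℝ)+2)) := by ring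
  calc (Ci.size : ℝ) ≤ ((n:ℝ)+2)^(E:ℕ) := hszR
    _ = ((n:ℝ)+2)^((E:ℕ):ℝ) := hrpow
    _ ≤ 2 ^ (100 * (n:ℝ)^((1:ℝ)/3) * Real.log ((n:ℝ)+2)) := hmain
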